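/- Let p_1 < p_2 < ... < p_k be distinct primes and m a positive integer such that 1/p_1 + ... + 1/p_k = 1 - 1/m. Then m = p_1 * p_2 * ... * p_k. -/
import Mathlib

open Finset

theorem erdos_equation_m_eq_prod (k : ℕ) (p : Fin k → ℕ)
    (hp : ∀ i, (p i).Prime) (hinj : Function.Injective p)
    (m : ℕ) (hm : 0 < m)
    (h : ∑ i, (1 : ℚ) / p i = 1 - 1 / m) :
    m = ∏ i, p i := by
  set P : ℕ := ∏ i, p i with hP
  have hPpos : 0 < P := Finset.prod_pos fun i _ => (hp i).pos
  set Si : Fin k → ℕ := fun i => ∏ j ∈ univ.erase i, p j with hSi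
  have hPS : ∀ i, p i * Si i = P := fun i => Finset.mul_prod_erase univ p (mem_univ i)
  set S : ℕ := ∑ i, Si i with hS
  have hsum : ∑ i, (1 : ℚ) / p i = S / P := by
    rw [hS]
    push_cast
    rw [Finset.sum_div]
    refine Finset.sum_congr rfl fun i _ => ?_
    have hpi : ((p i : ℚ)) ≠ 0 := by exact_mod_cast (hp i).pos.ne'
    have hP0 : ((P : ℚ)) ≠ 0 := by exact_mod_cast hPpos.ne'
    rw [div_eq_div_iff hpi hP0, one_mul]
    exact_mod_cast ((hPS i).symm.trans (mul_comm (p i) (Si i)))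
  have h2 : (S:ℚ)/P = 1 - 1/m := by rw [← hsum]; exact h
  have hP0 : ((P : ℚ)) ≠ 0 := by exact_mod_cast hPpos.ne'
  have hm0 : ((m : ℚ)) ≠ 0 := by exact_mod_cast hm.ne'
  field_simp at h2
  have key : (m:ℤ) * ((P:ℤ) - S) = P := by
    have : ((m:ℤ) * ((P:ℤ) - S) : ℚ) = ((P:ℤ) : ℚ) := by push_cast; linear_combination -h2
    exact_mod_cast this
  set D : ℤ := (P:ℤ) - S with hD
  have hDpos : 0 < D := by
    by_contra hnot
    push_neg at hnot
    have : (m:ℤ) * D ≤ 0 := mul_nonpos_of_nonneg_of_nonpos (by positivity) hnot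
    have hP' : (0:ℤ) < P := by exact_mod_cast hPpos
    omega
  have hDdvd : D ∣ (P:ℤ) := Dvd.intro_left m key
  have hnotdvd : ∀ i, ¬ ((p i : ℤ) ∣ D) := by
    intro i hdvd
    have hPd : (p i : ℤ) ∣ (P:ℤ) := by exact_mod_cast Finset.dvd_prod_of_mem p (mem_univ i)
    have hSd : p i ∣ S := by
      have : (p i : ℤ) ∣ (S:ℤ) := by
        have := dvd_sub hPd hdvd
        simpa [hD] using this
      exact_mod_cast this
    have hSii : p i ∣ Si i := by
      have hother : p i ∣ ∑ j ∈ univ.erase i, Si j := by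
        refine Finset.dvd_sum fun j hj => ?_
        have hij : i ∈ univ.erase j := by
          simp only [Finset.mem_erase, Finset.mem_univ, and_true] at hj ⊢
          exact fun e => hj e.symm
        exact Finset.dvd_prod_of_mem p hij
      have hdec : S = Si i + ∑ j ∈ univ.erase i, Si j :=
        (Finset.add_sum_erase univ Si (mem_univ i)).symm
      have := Nat.dvd_sub hSd hother
      rw [hdec] at this
      simpa using this
    obtain ⟨j, hj, hdj⟩ := (hp i).prime.exists_mem_finset_dvd hSii
    have hji : j ≠ i := (Finset.mem_erase.mp hj).1
    have : p i = p j := ((Nat.prime_dvd_prime_iff_eq (hp i) (hp j)).mp hdj)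
    exact hji (hinj this.symm)
  have hD1 : D = 1 := by
    by_contra hne
    have hge : 1 < D.toNat := by omega
    have hq := Nat.minFac_prime (by omega : D.toNat ≠ 1)
    set q := D.toNat.minFac
    have hqD : (q:ℤ) ∣ D := by
      have : (q:ℤ) ∣ (D.toNat : ℤ) := Int.natCast_dvd_natCast.mpr (Nat.minFac_dvd _)
      rwa [Int.toNat_of_nonneg hDpos.le] at this
    have hqP : q ∣ P := by
      have : (q:ℤ) ∣ (P:ℤ) := hqD.trans hDdvd
      exact_mod_cast this
    obtain ⟨i, _, hdi⟩ := hq.prime.exists_mem_finset_dvd hqP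
    have : q = p i := (Nat.prime_dvd_prime_iff_eq hq (hp i)).mp hdi
    exact hnotdvd i (this ▸ hqD)
  have : (m:ℤ) = P := by rw [hD1, mul_one] at key; exact key
  exact_mod_cast this
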